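/- Let X be a separable metric space. Then there exists a countable family (g_i)_{i∈ℕ} of bounded uniformly continuous real-valued functions on X such that for any sequence of Borel probability measures (μ_n) and Borel probability measure μ on X: μ_n converges weakly to μ if and only if ∫ g_i dμ_n → ∫ g_i dμ for all i ∈ ℕ. -/

import Mathlib

open MeasureTheory Filter Topology Metric

section VaradarajanAux

lemma varadarajan_ucMax {α : Type*} [UniformSpace α] {f g : α → ℝ}
    (hf : UniformContinuous f) (hg : UniformContinuous g) :
    UniformContinuous fun x => max (f x) (g x) := by
  have h : (fun x => max (f x) (g x)) = fun x => (f x + g x + |f x - g x|) / 2 := by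
    funext x
    rcases le_total (f x) (g x) with h | h
    · rw [max_eq_right h, abs_of_nonpos (by linarith)]; ring
    · rw [max_eq_left h, abs_of_nonneg (by linarith)]; ring
  rw [h]
  exact (((hf.add hg).add (Real.uniformContinuous_abs.comp (hf.sub hg))).div_const' 2)

lemma varadarajan_ucMin {α : Type*} [UniformSpace α] {f g : α → ℝ}
    (hf : UniformContinuous f) (hg : UniformContinuous g) :
    UniformContinuous fun x => min (f x) (g x) := by
  have h : (fun x => min (f x) (g x)) = fun x => (f x + g x - |f x - g x|) / 2 := by
    funext x
    rcases le_total (f x) (g x) with h | h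
    · rw [min_eq_left h, abs_of_nonpos (by linarith)]; ring
    · rw [min_eq_right h, abs_of_nonneg (by linarith)]; ring
  rw [h]
  exact (((hf.add hg).sub (Real.uniformContinuous_abs.comp (hf.sub hg))).div_const' 2)

variable (X : Type*) [MetricSpace X] [TopologicalSpace.SeparableSpace X]
    [MeasurableSpace X] [BorelSpace X] [Nonempty X]

/-- The key construction: a countable family of uniformly continuous `[0,1]`-valued
functions such that every open set can be approximated from inside in measure by
members of the family lying below its indicator. -/
lemma varadarajan_key :
    ∃ g : ℕ → X → ℝ,
      (∀ i, UniformContinuous (g i) ∧ ∀ x, 0 ≤ g i x ∧ g i x ≤ 1) ∧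
      ∀ (ν : Measure X) [IsFiniteMeasure ν] (G : Set X), IsOpen G →
        ∀ ε : ℝ, 0 < ε →
        ∃ i, (∀ x, g i x ≤ G.indicator 1 x) ∧ (ν G).toReal - ε ≤ ∫ x, g i x ∂ν := by
  classical
  set d : ℕ → X := TopologicalSpace.denseSeq X with hd_def
  have hd : DenseRange d := TopologicalSpace.denseRange_denseSeq X
  set q : ℕ → ℝ := fun m => ((Denumerable.ofNat ℚ m : ℚ) : ℝ) with hq_def
  -- basic bump functions
  set φ : ℕ × ℕ × ℕ → X → ℝ :=
    fun t x => max 0 (min 1 ((q t.2.1 - dist x (d t.1)) / (q t.2.1 - q t.2.2))) with hφ_def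
  have φ_uc : ∀ t, UniformContinuous (φ t) := by
    intro t
    apply varadarajan_ucMax uniformContinuous_const
    apply varadarajan_ucMin uniformContinuous_const
    exact (uniformContinuous_const.sub
      ((LipschitzWith.dist_left (d t.1)).uniformContinuous)).div_const' _
  have φ_nonneg : ∀ t x, 0 ≤ φ t x := fun t x => le_max_left _ _
  have φ_le_one : ∀ t x, φ t x ≤ 1 := by
    intro t x
    apply max_le zero_le_one (min_le_left _ _)
  have φ_one : ∀ t x, dist x (d t.1) ≤ q t.2.2 → q t.2.2 < q t.2.1 → φ t x = 1 := by
    intro t x hxd hrs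
    have h1 : (1 : ℝ) ≤ (q t.2.1 - dist x (d t.1)) / (q t.2.1 - q t.2.2) := by
      rw [le_div_iff₀ (by linarith)]
      linarith
    rw [hφ_def]
    simp only [min_eq_left h1]
    exact max_eq_right zero_le_one
  have φ_zero : ∀ t x, q t.2.1 < dist x (d t.1) → q t.2.2 < q t.2.1 → φ t x = 0 := by
    intro t x hxd hrs
    have h1 : (q t.2.1 - dist x (d t.1)) / (q t.2.1 - q t.2.2) ≤ 0 :=
      div_nonpos_of_nonpos_of_nonneg (by linarith) (by linarith)
    rw [hφ_def]
    have : min 1 ((q t.2.1 - dist x (d t.1)) / (q t.2.1 - q t.2.2)) ≤ 0 :=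
      le_trans (min_le_right _ _) h1
    exact max_eq_left this
  -- the countable family: maxima over finite sets of bump functions
  set F : ℕ → Finset (ℕ × ℕ × ℕ) := fun i => Denumerable.ofNat _ i with hF_def
  have fold_uc : ∀ S : Finset (ℕ × ℕ × ℕ),
      UniformContinuous (fun x => S.fold max 0 (fun t => φ t x)) := by
    intro S
    induction S using Finset.induction_on with
    | empty =>
        simp only [Finset.fold_empty]
        exact uniformContinuous_const
    | @insert a s ha ih =>
        simp only [Finset.fold_insert ha]
        exact varadarajan_ucMax (φ_uc a) ih
  refine ⟨fun i x => (F i).fold max 0 (fun t => φ t x), ?_, ?_⟩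
  · intro i
    refine ⟨fold_uc (F i), ?_⟩
    intro x
    constructor
    · exact (Finset.le_fold_max _).mpr (Or.inl le_rfl)
    · exact (Finset.fold_max_le _).mpr ⟨zero_le_one, fun t _ => φ_le_one t x⟩
  · intro ν _ G hG ε hε
    -- the good triples
    set D : Set (ℕ × ℕ × ℕ) :=
      {t | 0 < q t.2.2 ∧ q t.2.2 < q t.2.1 ∧ closedBall (d t.1) (q t.2.1) ⊆ G} with hD_def
    -- cover G by balls from D
    have cover : G = ⋃ t ∈ D, ball (d t.1) (q t.2.2) := by
      apply Set.Subset.antisymm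
      · intro x hx
        obtain ⟨δ, hδ, hball⟩ := Metric.isOpen_iff.mp hG x hx
        obtain ⟨j, hj⟩ := hd.exists_dist_lt x (by linarith : (0:ℝ) < δ/4)
        obtain ⟨a, ha1, ha2⟩ := exists_rat_btwn (by linarith : (δ:ℝ)/4 < δ/3)
        obtain ⟨b, hb1, hb2⟩ := exists_rat_btwn (by linarith : (δ:ℝ)/3 < δ/2)
        obtain ⟨m', hm'⟩ : ∃ m', Denumerable.ofNat ℚ m' = a :=
          ⟨@Encodable.encode ℚ Denumerable.toEncodable a, Denumerable.ofNat_encode a⟩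
        obtain ⟨m, hm⟩ : ∃ m, Denumerable.ofNat ℚ m = b :=
          ⟨@Encodable.encode ℚ Denumerable.toEncodable b, Denumerable.ofNat_encode b⟩
        have hqa : q m' = (a : ℝ) := by
          show ((Denumerable.ofNat ℚ m' : ℚ) : ℝ) = (a : ℝ)
          rw [hm']
        have hqb : q m = (b : ℝ) := by
          show ((Denumerable.ofNat ℚ m : ℚ) : ℝ) = (b : ℝ)
          rw [hm]
        simp only [Set.mem_iUnion, exists_prop]
        refine ⟨(j, m, m'), ?_, ?_⟩
        · refine ⟨by rw [hqa]; linarith, by rw [hqa, hqb]; linarith, ?_⟩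
          intro y hy
          simp only [mem_closedBall] at hy
          apply hball
          simp only [mem_ball]
          have : dist y x ≤ dist y (d j) + dist (d j) x := dist_triangle _ _ _
          rw [dist_comm (d j) x] at this
          rw [hqb] at hy
          linarith
        · simp only [mem_ball, hqa]
          have := dist_comm x (d j) ▸ hj
          linarith
      · intro x hx
        simp only [Set.mem_iUnion, exists_prop] at hx
        obtain ⟨t, ht, hxt⟩ := hx
        exact ht.2.2
          (mem_closedBall.mpr (le_of_lt (lt_of_lt_of_le (mem_ball.mp hxt) (le_of_lt ht.2.1))))
    -- exhaust G by finite unions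
    set e : ℕ → ℕ × ℕ × ℕ := Denumerable.ofNat _ with he_def
    set A : ℕ → Set X := fun n => if e n ∈ D then ball (d (e n).1) (q (e n).2.2) else ∅
      with hA_def
    have hGA : G = ⋃ n, A n := by
      rw [cover]
      apply Set.Subset.antisymm
      · intro x hx
        simp only [Set.mem_iUnion] at hx ⊢
        obtain ⟨t, ht, hxt⟩ := hx
        refine ⟨@Encodable.encode _ Denumerable.toEncodable t, ?_⟩
        simp only [hA_def]
        simp only [he_def, Denumerable.ofNat_encode, if_pos ht]
        exact hxt
      · intro x hx
        simp only [Set.mem_iUnion] at hx ⊢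
        obtain ⟨n, hn⟩ := hx
        simp only [hA_def] at hn
        by_cases h : e n ∈ D
        · rw [if_pos h] at hn; exact ⟨e n, h, hn⟩
        · rw [if_neg h] at hn; exact absurd hn (Set.notMem_empty x)
    have hAmeas : ∀ n, MeasurableSet (A n) := by
      intro n
      simp only [hA_def]
      by_cases h : e n ∈ D
      · rw [if_pos h]; exact isOpen_ball.measurableSet
      · rw [if_neg h]; exact MeasurableSet.empty
    have htend : Tendsto (fun N => (ν (Set.accumulate A N)).toReal) atTop
        (𝓝 ((ν G).toReal)) := by
      rw [hGA]
      exact (ENNReal.tendsto_toReal (measure_ne_top ν _)).comp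
        tendsto_measure_iUnion_accumulate
    obtain ⟨N, hN⟩ := (htend.eventually
      (eventually_gt_nhds (show (ν G).toReal - ε < (ν G).toReal by linarith))).exists
    -- the chosen finite set of bumps
    set T : Finset (ℕ × ℕ × ℕ) :=
      ((Finset.range (N + 1)).filter (fun n => e n ∈ D)).image e with hT_def
    have hTD : ∀ t ∈ T, t ∈ D := by
      intro t ht
      rw [hT_def] at ht
      obtain ⟨n, hn, rfl⟩ := Finset.mem_image.mp ht
      exact (Finset.mem_filter.mp hn).2
    obtain ⟨i, hi⟩ : ∃ i, F i = T := ⟨@Encodable.encode _ Denumerable.toEncodable T, Denumerable.ofNat_encode T⟩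
    refine ⟨i, ?_, ?_⟩
    · -- g i ≤ indicator G
      intro x
      by_cases hx : x ∈ G
      · rw [Set.indicator_of_mem hx]
        exact (Finset.fold_max_le _).mpr ⟨zero_le_one, fun t _ => φ_le_one t x⟩
      · rw [Set.indicator_of_notMem hx]
        apply (Finset.fold_max_le _).mpr
        refine ⟨le_rfl, fun t ht => ?_⟩
        have htD := hTD t (hi ▸ ht)
        have hdist : q t.2.1 < dist x (d t.1) := by
          by_contra h
          push_neg at h
          exact hx (htD.2.2 (mem_closedBall.mpr h))
        rw [φ_zero t x hdist htD.2.1]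
    · -- lower bound for the integral
      have g_int : Integrable (fun x => (F i).fold max 0 (fun t => φ t x)) ν := by
        refine ⟨((fold_uc (F i)).continuous).aestronglyMeasurable, ?_⟩
        apply MeasureTheory.HasFiniteIntegral.of_bounded (C := 1)
        apply ae_of_all
        intro x
        rw [Real.norm_eq_abs, abs_of_nonneg ((Finset.le_fold_max _).mpr (Or.inl le_rfl))]
        exact (Finset.fold_max_le _).mpr ⟨zero_le_one, fun t _ => φ_le_one t x⟩
      have hAccMeas : MeasurableSet (Set.accumulate A N) :=
        MeasurableSet.iUnion fun n => MeasurableSet.iUnion fun _ => hAmeas n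
      have ind_int : Integrable ((Set.accumulate A N).indicator (fun _ => (1:ℝ))) ν :=
        (integrable_const (1:ℝ)).indicator hAccMeas
      have ind_le : ∀ x, (Set.accumulate A N).indicator (fun _ => (1:ℝ)) x ≤
          (F i).fold max 0 (fun t => φ t x) := by
        intro x
        by_cases hx : x ∈ Set.accumulate A N
        · rw [Set.indicator_of_mem hx]
          obtain ⟨n, hn, hxn⟩ := Set.mem_accumulate.mp hx
          simp only [hA_def] at hxn
          by_cases h : e n ∈ D
          · rw [if_pos h] at hxn
            have htT : e n ∈ T := by
              rw [hT_def]
              exact Finset.mem_image_of_mem e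
                (Finset.mem_filter.mpr ⟨Finset.mem_range.mpr (Nat.lt_succ_of_le hn), h⟩)
            apply (Finset.le_fold_max _).mpr
            refine Or.inr ⟨e n, hi ▸ htT, ?_⟩
            rw [φ_one (e n) x (le_of_lt (mem_ball.mp hxn)) h.2.1]
          · rw [if_neg h] at hxn; exact absurd hxn (Set.notMem_empty x)
        · rw [Set.indicator_of_notMem hx]
          exact (Finset.le_fold_max _).mpr (Or.inl le_rfl)
      calc (ν G).toReal - ε ≤ (ν (Set.accumulate A N)).toReal := le_of_lt hN
        _ = ∫ x, (Set.accumulate A N).indicator (fun _ => (1:ℝ)) x ∂ν :=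
            (MeasureTheory.integral_indicator_one hAccMeas).symm
        _ ≤ ∫ x, (F i).fold max 0 (fun t => φ t x) ∂ν :=
            integral_mono ind_int g_int ind_le

end VaradarajanAux

/-- Varadarajan's lemma: on a separable metric space there is a countable family of
bounded uniformly continuous functions that determines weak convergence of Borel
probability measures. -/
theorem stmt_7 (X : Type*) [MetricSpace X] [TopologicalSpace.SeparableSpace X]
    [MeasurableSpace X] [BorelSpace X] :
    ∃ g : ℕ → X → ℝ,
      (∀ i, UniformContinuous (g i) ∧ ∃ M : ℝ, ∀ x, |g i x| ≤ M) ∧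
      ∀ (μ : ℕ → Measure X) (ν : Measure X),
        (∀ n, IsProbabilityMeasure (μ n)) → IsProbabilityMeasure ν →
        ((∀ f : X → ℝ, Continuous f → (∃ M : ℝ, ∀ x, |f x| ≤ M) →
            Tendsto (fun n => ∫ x, f x ∂(μ n)) atTop (𝓝 (∫ x, f x ∂ν)))
          ↔ (∀ i, Tendsto (fun n => ∫ x, g i x ∂(μ n)) atTop (𝓝 (∫ x, g i x ∂ν)))) := by
  rcases isEmpty_or_nonempty X with hX | hX
  · refine ⟨fun _ _ => 0, fun i => ⟨uniformContinuous_const, 0, fun x => by simp⟩, ?_⟩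
    intro μ ν hμ hν
    exfalso
    have h1 : ν Set.univ = 1 := hν.measure_univ
    rw [Set.univ_eq_empty_iff.mpr hX, measure_empty] at h1
    exact zero_ne_one h1
  · obtain ⟨g, hg, hkey⟩ := varadarajan_key X
    have gbd : ∀ i, ∀ x, |g i x| ≤ 1 := fun i x =>
      abs_le.mpr ⟨by linarith [((hg i).2 x).1], ((hg i).2 x).2⟩
    refine ⟨g, fun i => ⟨(hg i).1, 1, gbd i⟩, ?_⟩
    intro μ ν hμ hν
    haveI := hν
    haveI : ∀ n, IsProbabilityMeasure (μ n) := hμ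
    constructor
    · intro H i
      exact H (g i) ((hg i).1.continuous) ⟨1, gbd i⟩
    · intro H f fcont hMex
      obtain ⟨M, hM⟩ := hMex
      -- integrability of the g i's
      have g_int : ∀ i (ρ : Measure X) [IsFiniteMeasure ρ], Integrable (g i) ρ := by
        intro i ρ _
        refine ⟨(hg i).1.continuous.aestronglyMeasurable, ?_⟩
        apply MeasureTheory.HasFiniteIntegral.of_bounded (C := 1)
        exact ae_of_all _ fun x => by rw [Real.norm_eq_abs]; exact gbd i x
      -- liminf condition for open sets
      have h_opens : ∀ G, IsOpen G → ν G ≤ atTop.liminf (fun n => μ n G) := by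
        intro G hG
        apply ENNReal.le_of_forall_pos_le_add
        intro ε hε _
        obtain ⟨i, hle, hint⟩ := hkey ν G hG ε (by exact_mod_cast hε)
        have gnn : 0 ≤ ∫ x, g i x ∂ν := integral_nonneg fun x => ((hg i).2 x).1
        have h1 : ν G ≤ ENNReal.ofReal (∫ x, g i x ∂ν + ε) := by
          rw [← ENNReal.ofReal_toReal (measure_ne_top ν G)]
          exact ENNReal.ofReal_le_ofReal (by linarith)
        have h2 : ENNReal.ofReal (∫ x, g i x ∂ν + ε) =
            ENNReal.ofReal (∫ x, g i x ∂ν) + ENNReal.ofReal ε := ENNReal.ofReal_add gnn ε.2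
        have h3 : ENNReal.ofReal (∫ x, g i x ∂ν) =
            atTop.liminf (fun n => ENNReal.ofReal (∫ x, g i x ∂(μ n))) :=
          ((ENNReal.continuous_ofReal.continuousAt).tendsto.comp (H i)).liminf_eq.symm
        have h4 : ∀ n, ENNReal.ofReal (∫ x, g i x ∂(μ n)) ≤ μ n G := by
          intro n
          have key : ∫ x, g i x ∂(μ n) ≤ ((μ n) G).toReal := by
            have ind_int : Integrable (G.indicator (fun _ => (1:ℝ))) (μ n) :=
              (integrable_const (1:ℝ)).indicator hG.measurableSet
            calc ∫ x, g i x ∂(μ n) ≤ ∫ x, G.indicator (fun _ => (1:ℝ)) x ∂(μ n) :=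
                  integral_mono (g_int i (μ n)) ind_int hle
              _ = ((μ n) G).toReal := MeasureTheory.integral_indicator_one hG.measurableSet
          calc ENNReal.ofReal (∫ x, g i x ∂(μ n))
              ≤ ENNReal.ofReal (((μ n) G).toReal) := ENNReal.ofReal_le_ofReal key
            _ ≤ μ n G := ENNReal.ofReal_toReal_le
        calc ν G ≤ ENNReal.ofReal (∫ x, g i x ∂ν + ε) := h1
          _ = ENNReal.ofReal (∫ x, g i x ∂ν) + ENNReal.ofReal ε := h2
          _ ≤ atTop.liminf (fun n => μ n G) + ε := by
              gcongr
              · rw [h3]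
                exact Filter.liminf_le_liminf (Eventually.of_forall h4)
              · rw [ENNReal.ofReal_coe_nnreal]
      have h_bc : ∀ fb : BoundedContinuousFunction X ℝ,
          Tendsto (fun n => ∫ x, fb x ∂(μ n)) atTop (𝓝 (∫ x, fb x ∂ν)) := by
        intro fb
        apply BoundedContinuousFunction.tendsto_integral_of_forall_integral_le_liminf_integral
        intro h hnn
        exact MeasureTheory.integral_le_liminf_integral_of_forall_isOpen_measure_le_liminf_measure hnn h_opens
      have hF := h_bc (BoundedContinuousFunction.ofNormedAddCommGroup f fcont M
        (fun x => by rw [Real.norm_eq_abs]; exact hM x))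
      simpa only [BoundedContinuousFunction.coe_ofNormedAddCommGroup] using hF
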